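/- Let P be a d-dimensional polyhedron in ℝ^d (with vertex-set in a standard periodic set Λ), let U be the linear subspace of all Q ∈ S^d satisfying ⟨N_{V,w}, Q⟩ = 0 for all affinely independent sets V ⊆ vert P of cardinality d+1 and all w ∈ vert P, and let F be a facet of P. If V is an affinely independent subset of vert F of cardinality d, u, w ∈ vert P \ F, and w' ∈ ℝ^d, then the orthogonal projections onto U satisfy π_U(N_{V∪{w},w'}) = π_U(N_{V∪{u},w'}). -/

import Mathlib

open Matrix Finset MeasureTheory Polynomial

noncomputable section

namespace Vor

variable {d : ℕ}

/-- The space of real `d × d` matrices (quadratic forms live in the symmetric ones). -/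
abbrev Md (d : ℕ) := Matrix (Fin d) (Fin d) ℝ

/-- Trace inner product `⟨A, B⟩ = trace (A * B)` on matrices. -/
def minner (A B : Md d) : ℝ := (A * B).trace

/-- The quadratic form `Q[x] = xᵗ Q x`. -/
def qf (Q : Md d) (x : Fin d → ℝ) : ℝ := x ⬝ᵥ Q.mulVec x

/-- The real vector associated to an integral vector. -/
def intVec (v : Fin d → ℤ) : Fin d → ℝ := fun j => (v j : ℝ)

/-- The lattice `ℤ^d` viewed inside `ℝ^d`. -/
def latticeZ (d : ℕ) : Set (Fin d → ℝ) := Set.range (intVec (d := d))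

/-- A standard periodic set `Λ = ⋃ i, (tᵢ + ℤ^d)`. -/
def IsStdPeriodic (Λ : Set (Fin d → ℝ)) : Prop :=
  ∃ m : ℕ, 0 < m ∧ ∃ t : Fin m → (Fin d → ℝ),
    Λ = {x | ∃ (i : Fin m) (v : Fin d → ℤ), x = t i + intVec v}

/-- The real matrix obtained from an integral matrix. -/
def rmat (U : Matrix (Fin d) (Fin d) ℤ) : Md d := U.map fun z => (z : ℝ)

/-- `U ∈ GL_d(ℤ)`. -/
def IsUnimodular (U : Matrix (Fin d) (Fin d) ℤ) : Prop := IsUnit U.det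

/-- The action `Q ↦ Uᵗ Q U`. -/
def conjQ (U : Matrix (Fin d) (Fin d) ℤ) (Q : Md d) : Md d := (rmat U)ᵀ * Q * rmat U

/-- The action of `GL_d(ℤ)` on subsets of the space of forms. -/
def conjSet (U : Matrix (Fin d) (Fin d) ℤ) (S : Set (Md d)) : Set (Md d) := conjQ U '' S

/-- The rational closure `S̃^d_{≥0}`: positive semidefinite forms that are
`GL_d(ℤ)`-equivalent to a block diagonal form with a zero block and a positive
definite block. -/
def RationalClosure (d : ℕ) : Set (Md d) :=
  {Q | Q.PosSemidef ∧ ∃ U : Matrix (Fin d) (Fin d) ℤ, IsUnimodular U ∧ ∃ k : ℕ, k ≤ d ∧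
    (∀ i j : Fin d, ((i : ℕ) < k ∨ (j : ℕ) < k) → conjQ U Q i j = 0) ∧
    (∀ x : Fin d → ℝ, (∀ i : Fin d, (i : ℕ) < k → x i = 0) → x ≠ 0 → 0 < qf (conjQ U Q) x)}

/-- `P` is a Delone polyhedron of the form `Q` with respect to the point set `Λ`:
`P` is the convex hull of the set `S` of points of `Λ` lying on some sphere
(center `c`, radius `r`) which contains no other point of `Λ` on it or inside. -/
def IsDelonePoly (Λ : Set (Fin d → ℝ)) (Q : Md d) (P : Set (Fin d → ℝ)) : Prop :=
  ∃ S : Set (Fin d → ℝ), S ⊆ Λ ∧ S.Nonempty ∧ P = convexHull ℝ S ∧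
    ∃ (c : Fin d → ℝ) (r : ℝ),
      (∀ v ∈ S, qf Q (c - v) = r ^ 2) ∧ ∀ v ∈ Λ, v ∉ S → r ^ 2 < qf Q (c - v)

/-- The Delone subdivision of `Q` with respect to `Λ`. -/
def DelSub (Λ : Set (Fin d → ℝ)) (Q : Md d) : Set (Set (Fin d → ℝ)) :=
  {P | IsDelonePoly Λ Q P}

/-- The secondary cone of a (Delone) subdivision `D`:
all forms in the rational closure whose Delone subdivision is `D`. -/
def SecCone (Λ : Set (Fin d → ℝ)) (D : Set (Set (Fin d → ℝ))) : Set (Md d) :=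
  {Q | Q ∈ RationalClosure d ∧ DelSub Λ Q = D}

/-- `α` gives the coefficients of an affine combination of the points of `V` representing `w`. -/
def IsAffComb (V : Finset (Fin d → ℝ)) (α : (Fin d → ℝ) → ℝ) (w : Fin d → ℝ) : Prop :=
  (∑ v ∈ V, α v) = 1 ∧ (∑ v ∈ V, α v • v) = w

/-- The form `N_{V,w} = wwᵗ - ∑_{v ∈ V} α_v vvᵗ`. -/
def Nform (V : Finset (Fin d → ℝ)) (α : (Fin d → ℝ) → ℝ) (w : Fin d → ℝ) : Md d :=
  vecMulVec w w - ∑ v ∈ V, α v • vecMulVec v v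

/-- A finite set of points is affinely independent. -/
def AffIndep (V : Finset (Fin d → ℝ)) : Prop :=
  AffineIndependent ℝ (fun v : {x // x ∈ V} => (v : Fin d → ℝ))

/-- Insertion into a finset (classical, to avoid decidability assumptions). -/
def finsert (w : Fin d → ℝ) (V : Finset (Fin d → ℝ)) : Finset (Fin d → ℝ) :=
  letI := Classical.decEq (Fin d → ℝ)
  insert w V

/-- A polyhedron: a finite intersection of closed halfspaces. -/
def IsPolyhedron (P : Set (Fin d → ℝ)) : Prop :=
  ∃ (n : ℕ) (a : Fin n → (Fin d → ℝ)) (b : Fin n → ℝ), P = {x | ∀ i, a i ⬝ᵥ x ≤ b i}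

/-- `F` is a face of `P` (cut out by a supporting hyperplane). -/
def IsFaceOf (F P : Set (Fin d → ℝ)) : Prop :=
  ∃ (a : Fin d → ℝ) (b : ℝ), (∀ x ∈ P, a ⬝ᵥ x ≤ b) ∧ F = {x ∈ P | a ⬝ᵥ x = b}

/-- The (affine) dimension of a set of points. -/
def sdim (S : Set (Fin d → ℝ)) : ℕ := Module.finrank ℝ ↥(vectorSpan ℝ S)

/-- A (face-to-face) polyhedral subdivision of `ℝ^d`. -/
def IsPolySubdiv (D : Set (Set (Fin d → ℝ))) : Prop :=
  (∀ P ∈ D, IsPolyhedron P ∧ P.Nonempty) ∧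
  ⋃₀ D = Set.univ ∧
  (∀ P ∈ D, ∀ F : Set (Fin d → ℝ), IsFaceOf F P → F.Nonempty → F ∈ D) ∧
  ∀ P ∈ D, ∀ P' ∈ D, (P ∩ P').Nonempty → IsFaceOf (P ∩ P') P

/-- `D` has vertex-set `Λ`: every member is the convex hull of its points of `Λ`. -/
def HasVertexSet (Λ : Set (Fin d → ℝ)) (D : Set (Set (Fin d → ℝ))) : Prop :=
  ∀ P ∈ D, P = convexHull ℝ (Λ ∩ P)

/-- A (closed) polyhedral cone in the space of matrices. -/
def IsPolyConeM (C : Set (Md d)) : Prop :=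
  ∃ (n : ℕ) (A : Fin n → Md d), C = {Q | ∀ i, 0 ≤ minner (A i) Q}

/-- `F` is a face of the cone `C` in the space of matrices. -/
def IsFaceOfM (F C : Set (Md d)) : Prop :=
  ∃ A : Md d, (∀ X ∈ C, 0 ≤ minner A X) ∧ F = {X ∈ C | minner A X = 0}

/-- A relatively open polyhedral cone: solutions of finitely many linear equalities and
strict linear inequalities. -/
def IsRelOpenPolyCone (C : Set (Md d)) : Prop :=
  ∃ (n m : ℕ) (A : Fin n → Md d) (B : Fin m → Md d),
    C = {Q | (∀ i, minner (A i) Q = 0) ∧ ∀ j, 0 < minner (B j) Q}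

/-- Condition (a): the linear equalities coming from the `d`-dimensional cells of `D`. -/
def condA (Λ : Set (Fin d → ℝ)) (D : Set (Set (Fin d → ℝ))) (Q : Md d) : Prop :=
  ∀ P ∈ D, sdim P = d →
    ∀ V : Finset (Fin d → ℝ), (↑V : Set (Fin d → ℝ)) ⊆ Λ ∩ P → AffIndep V → V.card = d + 1 →
      ∀ w ∈ Λ ∩ P, ∀ α : (Fin d → ℝ) → ℝ, IsAffComb V α w →
        minner (Nform V α w) Q = 0

/-- Condition (b): the linear strict inequalities coming from the `(d-1)`-dimensional
cells of `D`. -/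
def condB (Λ : Set (Fin d → ℝ)) (D : Set (Set (Fin d → ℝ))) (Q : Md d) : Prop :=
  ∀ F ∈ D, sdim F = d - 1 →
    ∀ P ∈ D, ∀ P' ∈ D, sdim P = d → sdim P' = d → P ≠ P' → F = P ∩ P' →
      ∀ V : Finset (Fin d → ℝ), (↑V : Set (Fin d → ℝ)) ⊆ Λ ∩ F → AffIndep V → V.card = d →
        ∀ w ∈ (Λ ∩ P) \ F, ∀ w' ∈ (Λ ∩ P') \ F,
          ∀ α : (Fin d → ℝ) → ℝ, IsAffComb (finsert w V) α w' →
            0 < minner (Nform (finsert w V) α w') Q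

/-- The lifting map `w_Q(x) = (x, Q[x]) ∈ ℝ^{d+1}`. -/
def liftQ (Q : Md d) (x : Fin d → ℝ) : Fin (d + 1) → ℝ := Fin.snoc x (qf Q x)

/-- Projection `ℝ^{d+1} → ℝ^d` onto the first `d` coordinates. -/
def projd (y : Fin (d + 1) → ℝ) : Fin d → ℝ := fun i => y i.castSucc

/-- `G` is a finite subgroup of `GL_d(ℤ)` (given as a set of integral matrices). -/
def IsFinMatGroup (G : Set (Matrix (Fin d) (Fin d) ℤ)) : Prop :=
  G.Finite ∧ (1 : Matrix (Fin d) (Fin d) ℤ) ∈ G ∧ (∀ g ∈ G, IsUnimodular g) ∧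
    (∀ g ∈ G, ∀ h ∈ G, g * h ∈ G) ∧ ∀ g ∈ G, g⁻¹ ∈ G

/-- The space of invariant forms `F(G)` of `G ≤ GL_d(ℤ)`. -/
def FG (G : Set (Matrix (Fin d) (Fin d) ℤ)) : Set (Md d) :=
  {Q | Q.IsSymm ∧ ∀ g ∈ G, conjQ g Q = Q}

/-- The Bravais group `B(G)`: the pointwise stabilizer of `F(G)` in `GL_d(ℤ)`. -/
def BG (G : Set (Matrix (Fin d) (Fin d) ℤ)) : Set (Matrix (Fin d) (Fin d) ℤ) :=
  {g | IsUnimodular g ∧ ∀ Q ∈ FG G, conjQ g Q = Q}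

/-- The normalizer `N(B(G))` of the Bravais group in `GL_d(ℤ)`. -/
def NBG (G : Set (Matrix (Fin d) (Fin d) ℤ)) : Set (Matrix (Fin d) (Fin d) ℤ) :=
  {n | IsUnimodular n ∧ ∀ b : Matrix (Fin d) (Fin d) ℤ, b ∈ BG G ↔ n⁻¹ * b * n ∈ BG G}

/-- The inhomogeneous minimum `μ(Q) = sup_x inf_{v ∈ ℤ^d} Q[x - v]`. -/
def InhomMin (Q : Md d) : ℝ :=
  ⨆ x : Fin d → ℝ, ⨅ v : Fin d → ℤ, qf Q (x - intVec v)

/-- The bilinear form `(x, y) = xᵗ Q y` associated to `Q`. -/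
def bip (Q : Md d) (x y : Fin d → ℝ) : ℝ := x ⬝ᵥ Q.mulVec y

/-- `F` is a facet of the subdivision `D`: a `(d-1)`-dimensional cell, the intersection of
two adjacent `d`-dimensional cells. -/
def IsFacetOfSubdiv (D : Set (Set (Fin d → ℝ))) (F : Set (Fin d → ℝ)) : Prop :=
  F ∈ D ∧ sdim F = d - 1 ∧
    ∃ P ∈ D, ∃ P' ∈ D, sdim P = d ∧ sdim P' = d ∧ P ≠ P' ∧ F = P ∩ P'

/-- The linear subspace `U` of forms satisfying all equalities of the secondary cone of `D`. -/
def UD (Λ : Set (Fin d → ℝ)) (D : Set (Set (Fin d → ℝ))) : Set (Md d) :=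
  {X | X.IsSymm ∧ condA Λ D X}

/-- `ND` assigns to each facet `F` of `D` the form `N_{D,F}`: the unit-norm form in `U`
such that the projection onto `U` of every form `N_{V∪{w},w'}` attached to `F` is a
positive multiple of it. -/
def IsNDassign (Λ : Set (Fin d → ℝ)) (D : Set (Set (Fin d → ℝ)))
    (ND : Set (Fin d → ℝ) → Md d) : Prop :=
  ∀ F, IsFacetOfSubdiv D F → ND F ∈ UD Λ D ∧ minner (ND F) (ND F) = 1 ∧
    ∀ P ∈ D, ∀ P' ∈ D, sdim P = d → sdim P' = d → P ≠ P' → F = P ∩ P' →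
      ∀ V : Finset (Fin d → ℝ), (↑V : Set (Fin d → ℝ)) ⊆ Λ ∩ F → AffIndep V → V.card = d →
        ∀ w ∈ (Λ ∩ P) \ F, ∀ w' ∈ (Λ ∩ P') \ F,
          ∀ α : (Fin d → ℝ) → ℝ, IsAffComb (finsert w V) α w' →
            ∃ β : ℝ, 0 < β ∧ ∀ X ∈ UD Λ D,
              minner (Nform (finsert w V) α w') X = β * minner (ND F) X

/-- The set `R_F` of facets of `D` whose form `N_{D,F'}` projects onto `T` to a positive
multiple of `NF`. -/
def RFset (Λ : Set (Fin d → ℝ)) (D : Set (Set (Fin d → ℝ)))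
    (ND : Set (Fin d → ℝ) → Md d) (T : Set (Md d)) (NF : Md d) :
    Set (Set (Fin d → ℝ)) :=
  {F | IsFacetOfSubdiv D F ∧ ∃ γ : ℝ, 0 < γ ∧ ∀ X ∈ T, minner (ND F) X = γ * minner NF X}

/-- The chain relation on the facets of `R_F`: connected by a chain of adjacent
`d`-dimensional cells of `D`. -/
def FlipRel (D RFs : Set (Set (Fin d → ℝ))) (F1 F2 : Set (Fin d → ℝ)) : Prop :=
  ∃ (n : ℕ) (Fch : Fin (n + 1) → Set (Fin d → ℝ)) (Pch : Fin (n + 2) → Set (Fin d → ℝ)),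
    Fch 0 = F1 ∧ Fch (Fin.last n) = F2 ∧ (∀ i, Fch i ∈ RFs) ∧
    ∀ i : Fin (n + 1), Pch i.castSucc ∈ D ∧ Pch i.succ ∈ D ∧
      sdim (Pch i.castSucc) = d ∧ sdim (Pch i.succ) = d ∧
      Fch i = Pch i.castSucc ∩ Pch i.succ

/-- `C` is an equivalence class of the chain relation on `RFs`. -/
def IsEqClass (D RFs C : Set (Set (Fin d → ℝ))) : Prop :=
  C ⊆ RFs ∧ C.Nonempty ∧ ∀ F1 ∈ C, ∀ F2 ∈ RFs, (FlipRel D RFs F1 F2 ↔ F2 ∈ C)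

/-- The vertex set `V_C` of an equivalence class `C`: all vertices of `d`-dimensional
cells of `D` having a facet in `C`. -/
def VCset (Λ : Set (Fin d → ℝ)) (D C : Set (Set (Fin d → ℝ))) : Set (Fin d → ℝ) :=
  {x | ∃ P ∈ D, sdim P = d ∧ (∃ F ∈ C, IsFaceOf F P) ∧ x ∈ Λ ∩ P}

/-- A lower facet of a set in `ℝ^{d+1}`: a facet whose outer normal has negative last
coordinate. -/
def IsLowerFacet (S F : Set (Fin (d + 1) → ℝ)) : Prop :=
  ∃ (a : Fin (d + 1) → ℝ) (b : ℝ), (∀ x ∈ S, a ⬝ᵥ x ≤ b) ∧ F = {x ∈ S | a ⬝ᵥ x = b} ∧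
    Module.finrank ℝ ↥(vectorSpan ℝ F) = d ∧ a (Fin.last d) < 0

/-- An upper facet of a set in `ℝ^{d+1}`: a facet whose outer normal has positive last
coordinate. -/
def IsUpperFacet (S F : Set (Fin (d + 1) → ℝ)) : Prop :=
  ∃ (a : Fin (d + 1) → ℝ) (b : ℝ), (∀ x ∈ S, a ⬝ᵥ x ≤ b) ∧ F = {x ∈ S | a ⬝ᵥ x = b} ∧
    Module.finrank ℝ ↥(vectorSpan ℝ F) = d ∧ 0 < a (Fin.last d)


/-- Auxiliary: dot product with a finite sum. -/
private lemma dot_sum' {d : ℕ} (a : Fin d → ℝ) (S : Finset (Fin d → ℝ))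
    (f : (Fin d → ℝ) → (Fin d → ℝ)) :
    a ⬝ᵥ (∑ v ∈ S, f v) = ∑ v ∈ S, a ⬝ᵥ f v := by
  simp only [dotProduct, Finset.sum_apply, Finset.mul_sum]
  rw [Finset.sum_comm]

private lemma minner_sub' {d : ℕ} (A B X : Md d) :
    minner (A - B) X = minner A X - minner B X := by
  simp [minner, sub_mul]

private lemma minner_smul' {d : ℕ} (c : ℝ) (A X : Md d) :
    minner (c • A) X = c * minner A X := by
  simp [minner, smul_mul_assoc]

/-- For a facet `F` of a `d`-dimensional polyhedron `P`, the projection of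
`N_{V∪{w},w'}` onto the subspace `U` cut out by the equalities of `P` does not depend on
the choice of the apex `w` among the vertices of `P` outside `F`: equivalently, the
difference of two such forms is orthogonal to `U`. -/
theorem statement7 (d : ℕ) (Λ : Set (Fin d → ℝ)) (hΛ : IsStdPeriodic Λ)
    (P : Set (Fin d → ℝ)) (hPpoly : IsPolyhedron P) (hPdim : sdim P = d)
    (hPvert : P = convexHull ℝ (Λ ∩ P))
    (F : Set (Fin d → ℝ)) (hF : IsFaceOf F P) (hFdim : sdim F = d - 1)
    (V : Finset (Fin d → ℝ))
    (hV : (↑V : Set (Fin d → ℝ)) ⊆ Λ ∩ F)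
    (hVi : AffIndep V) (hVc : V.card = d)
    (u w : Fin d → ℝ) (hu : u ∈ (Λ ∩ P) \ F) (hw : w ∈ (Λ ∩ P) \ F) (w' : Fin d → ℝ)
    (α α' : (Fin d → ℝ) → ℝ)
    (hα : IsAffComb (finsert w V) α w') (hα' : IsAffComb (finsert u V) α' w') :
    ∀ X : Md d, X.IsSymm →
      (∀ W : Finset (Fin d → ℝ), (↑W : Set (Fin d → ℝ)) ⊆ Λ ∩ P → AffIndep W →
        W.card = d + 1 → ∀ u' ∈ Λ ∩ P, ∀ β : (Fin d → ℝ) → ℝ, IsAffComb W β u' →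
          minner (Nform W β u') X = 0) →
      minner (Nform (finsert w V) α w' - Nform (finsert u V) α' w') X = 0 := by
  classical
  intro X _hXsymm hX
  have hfi : ∀ (x : Fin d → ℝ) (S : Finset (Fin d → ℝ)), finsert x S = insert x S := by
    intro x S
    unfold finsert
    ext y
    simp
  obtain ⟨a, b, haP, hFeq⟩ := hF
  have hFP : F ⊆ P := by
    rw [hFeq]; intro x hx; exact hx.1
  have hVb : ∀ v ∈ V, a ⬝ᵥ v = b := by
    intro v hv
    have h1 : v ∈ F := (hV hv).2
    rw [hFeq] at h1
    exact h1.2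
  have hwP : w ∈ P := hw.1.2
  have huP : u ∈ P := hu.1.2
  have hwb : a ⬝ᵥ w < b := by
    refine lt_of_le_of_ne (haP w hwP) fun h => hw.2 ?_
    rw [hFeq]; exact ⟨hwP, h⟩
  have hub : a ⬝ᵥ u < b := by
    refine lt_of_le_of_ne (haP u huP) fun h => hu.2 ?_
    rw [hFeq]; exact ⟨huP, h⟩
  have hwV : w ∉ V := fun h => hw.2 (hV h).2
  have huV : u ∉ V := fun h => hu.2 (hV h).2
  simp only [hfi] at hα hα' ⊢
  obtain ⟨hα1, hα2⟩ := hα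
  obtain ⟨hα'1, hα'2⟩ := hα'
  rw [Finset.sum_insert hwV] at hα1 hα2
  rw [Finset.sum_insert huV] at hα'1 hα'2
  -- dot-product identities
  have hVdot : ∀ β : (Fin d → ℝ) → ℝ, ∑ v ∈ V, a ⬝ᵥ (β v • v) = (∑ v ∈ V, β v) * b := by
    intro β
    rw [Finset.sum_mul]
    refine Finset.sum_congr rfl fun v hv => ?_
    rw [dotProduct_smul, hVb v hv, smul_eq_mul]
  have e1 : b - a ⬝ᵥ w' = α w * (b - a ⬝ᵥ w) := by
    have h1 : a ⬝ᵥ w' = α w * (a ⬝ᵥ w) + (∑ v ∈ V, α v) * b := by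
      rw [← hα2, dotProduct_add, dot_sum', hVdot, dotProduct_smul, smul_eq_mul]
    have h2 : ∑ v ∈ V, α v = 1 - α w := by linarith
    rw [h1, h2]; ring
  have e2 : b - a ⬝ᵥ w' = α' u * (b - a ⬝ᵥ u) := by
    have h1 : a ⬝ᵥ w' = α' u * (a ⬝ᵥ u) + (∑ v ∈ V, α' v) * b := by
      rw [← hα'2, dotProduct_add, dot_sum', hVdot, dotProduct_smul, smul_eq_mul]
    have h2 : ∑ v ∈ V, α' v = 1 - α' u := by linarith
    rw [h1, h2]; ring
  have hkey : α w * (b - a ⬝ᵥ w) = α' u * (b - a ⬝ᵥ u) := by rw [← e1, ← e2]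
  by_cases hc : α w = 0
  · -- degenerate case: w' lies in the affine hull of V
    have hcu : α' u = 0 := by
      have h0 : α' u * (b - a ⬝ᵥ u) = 0 := by rw [← hkey, hc]; ring
      rcases mul_eq_zero.1 h0 with h | h
      · exact h
      · exfalso; linarith
    have hzero : ∀ v ∈ V, α v - α' v = 0 := by
      refine hVi.eq_zero_of_sum_eq_zero_subtype (w := fun x => α x - α' x) ?_ ?_
      · rw [Finset.sum_sub_distrib]
        have h2 : ∑ v ∈ V, α v = 1 - α w := by linarith
        have h2' : ∑ v ∈ V, α' v = 1 - α' u := by linarith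
        rw [h2, h2', hc, hcu]; ring
      · have hs : ∑ v ∈ V, (α v - α' v) • v
            = (∑ v ∈ V, α v • v) - ∑ v ∈ V, α' v • v := by
          rw [← Finset.sum_sub_distrib]
          exact Finset.sum_congr rfl fun v _ => by rw [sub_smul]
        rw [hs]
        have h3 : ∑ v ∈ V, α v • v = w' := by
          rw [← hα2, hc, zero_smul, zero_add]
        have h3' : ∑ v ∈ V, α' v • v = w' := by
          rw [← hα'2, hcu, zero_smul, zero_add]
        rw [h3, h3', sub_self]
    have hNeq : Nform (insert w V) α w' = Nform (insert u V) α' w' := by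
      unfold Nform
      rw [Finset.sum_insert hwV, Finset.sum_insert huV, hc, hcu, zero_smul, zero_smul,
        zero_add, zero_add]
      congr 1
      refine Finset.sum_congr rfl fun v hv => ?_
      have := hzero v hv
      have hveq : α v = α' v := by linarith
      rw [hveq]
    rw [hNeq, sub_self]
    simp [minner]
  · -- main case: the difference is a multiple of a form attached to `P`
    have hcu : α' u ≠ 0 := by
      intro h0
      apply hc
      have h1 : α w * (b - a ⬝ᵥ w) = 0 := by rw [hkey, h0]; ring
      rcases mul_eq_zero.1 h1 with h | h
      · exact h
      · exfalso; linarith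
    set β : (Fin d → ℝ) → ℝ :=
      fun x => if x = w then α w / α' u else (α x - α' x) / α' u with hβ
    have hβw : β w = α w / α' u := by simp [hβ]
    have hβv : ∀ v ∈ V, β v = (α v - α' v) / α' u := by
      intro v hv
      have hvw : v ≠ w := fun h => hwV (h ▸ hv)
      simp [hβ, hvw]
    -- the inserted set is affinely independent
    have hWi : AffIndep (insert w V) := by
      by_contra hcon
      obtain ⟨f, hf1, hf2, x, hx, hfx⟩ :=
        exists_nontrivial_relation_sum_zero_of_not_affine_ind hcon
      rw [Finset.sum_insert hwV] at hf1 hf2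
      have hd : f w * (a ⬝ᵥ w) + (∑ v ∈ V, f v) * b = 0 := by
        have h1 : a ⬝ᵥ (f w • w + ∑ v ∈ V, f v • v)
            = f w * (a ⬝ᵥ w) + (∑ v ∈ V, f v) * b := by
          rw [dotProduct_add, dot_sum', hVdot, dotProduct_smul, smul_eq_mul]
        rw [← h1, hf1, dotProduct_zero]
      have hfsum : ∑ v ∈ V, f v = -f w := by linarith
      have hfw : f w = 0 := by
        have h1 : f w * (a ⬝ᵥ w - b) = 0 := by rw [hfsum] at hd; linarith [hd]; 
        rcases mul_eq_zero.1 h1 with h | h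
        · exact h
        · exfalso; linarith
      have hall : ∀ v ∈ V, f v = 0 := by
        refine hVi.eq_zero_of_sum_eq_zero_subtype (w := f) ?_ ?_
        · rw [hfsum, hfw]; ring
        · rw [hfw, zero_smul, zero_add] at hf1; exact hf1
      rcases Finset.mem_insert.1 hx with h | h
      · exact hfx (h ▸ hfw)
      · exact hfx (hall x h)
    -- `β` realises `u` as an affine combination of `insert w V`
    have hβcomb : IsAffComb (insert w V) β u := by
      constructor
      · rw [Finset.sum_insert hwV, hβw]
        have hs : ∑ v ∈ V, β v = ∑ v ∈ V, (α v - α' v) / α' u :=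
          Finset.sum_congr rfl hβv
        rw [hs, ← Finset.sum_div, Finset.sum_sub_distrib]
        have h2 : ∑ v ∈ V, α v = 1 - α w := by linarith
        have h2' : ∑ v ∈ V, α' v = 1 - α' u := by linarith
        rw [h2, h2']
        field_simp
        ring
      · rw [Finset.sum_insert hwV, hβw]
        have hs : ∑ v ∈ V, β v • v = (α' u)⁻¹ • ((∑ v ∈ V, α v • v) - ∑ v ∈ V, α' v • v) := by
          rw [← Finset.sum_sub_distrib, Finset.smul_sum]
          refine Finset.sum_congr rfl fun v hv => ?_
          rw [hβv v hv, div_eq_inv_mul, mul_smul, sub_smul]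
        have h3 : ∑ v ∈ V, α v • v = w' - α w • w := by
          rw [← hα2]; abel
        have h3' : ∑ v ∈ V, α' v • v = w' - α' u • u := by
          rw [← hα'2]; abel
        rw [hs, h3, h3']
        have hd1 : w' - α w • w - (w' - α' u • u) = α' u • u - α w • w := by abel
        rw [hd1, smul_sub, ← mul_smul, ← mul_smul,
          inv_mul_cancel₀ hcu, one_smul, div_eq_inv_mul]
        abel
    -- apply the hypothesis to get the vanishing of the attached form
    have hWsub : (↑(insert w V) : Set (Fin d → ℝ)) ⊆ Λ ∩ P := by
      intro x hx
      rcases Finset.mem_insert.1 (by exact_mod_cast hx) with h | h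
      · exact h ▸ hw.1
      · exact ⟨(hV h).1, hFP (hV h).2⟩
    have hWcard : (insert w V).card = d + 1 := by
      rw [Finset.card_insert_of_notMem hwV, hVc]
    have h0 : minner (Nform (insert w V) β u) X = 0 := by
      exact hX (insert w V) hWsub hWi hWcard u hu.1 β hβcomb
    -- the difference is `α' u` times that form
    have hsum : (α' u) • (∑ v ∈ insert w V, β v • vecMulVec v v)
        = α w • vecMulVec w w + ∑ v ∈ V, (α v - α' v) • vecMulVec v v := by
      rw [Finset.sum_insert hwV, smul_add, Finset.smul_sum]
      congr 1
      · rw [hβw, ← mul_smul]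
        congr 1
        field_simp
      · refine Finset.sum_congr rfl fun v hv => ?_
        rw [hβv v hv, ← mul_smul]
        congr 1
        field_simp
    have hN : Nform (insert w V) α w' - Nform (insert u V) α' w'
        = α' u • Nform (insert w V) β u := by
      unfold Nform
      rw [smul_sub, hsum, Finset.sum_insert hwV, Finset.sum_insert huV]
      have hs : ∑ v ∈ V, (α v - α' v) • vecMulVec v v
          = (∑ v ∈ V, α v • vecMulVec v v) - ∑ v ∈ V, α' v • vecMulVec v v := by
        rw [← Finset.sum_sub_distrib]
        exact Finset.sum_congr rfl fun v _ => by rw [sub_smul]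
      rw [hs]
      abel
    rw [hN, minner_smul', h0, mul_zero]

end Vor

end
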